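/- Let κ be a cardinal. Suppose that in every σ-centered core compact topological space, for any family 𝒟 of at most κ dense open sets there is an irreducible subset meeting every member of 𝒟. Then κ < 𝔭. -/
import Mathlib


/-- A topological space is ccc if any uncountable collection of nonempty open sets
has two distinct members with nonempty intersection. -/
def CCCSpace (X : Type) [TopologicalSpace X] : Prop :=
  ∀ 𝒞 : Set (Set X), (∀ U ∈ 𝒞, IsOpen U ∧ U.Nonempty) → ¬ 𝒞.Countable →
    ∃ U ∈ 𝒞, ∃ V ∈ 𝒞, U ≠ V ∧ (U ∩ V).Nonempty

/-- A space is locally compact if every open set contains a compact neighborhood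
of each of its points. -/
def LocCompactSp (X : Type) [TopologicalSpace X] : Prop :=
  ∀ O : Set X, IsOpen O → ∀ x ∈ O,
    ∃ K U : Set X, IsCompact K ∧ IsOpen U ∧ x ∈ U ∧ U ⊆ K ∧ K ⊆ O

/-- A subset is irreducible if it is closed, nonempty, and is not the union of
two proper closed subsets. -/
def IrredSet {X : Type} [TopologicalSpace X] (C : Set X) : Prop :=
  IsClosed C ∧ C.Nonempty ∧
    ∀ A B : Set X, IsClosed A → IsClosed B → C = A ∪ B → C = A ∨ C = B

/-- A space is sober if it is T0 and every irreducible subset is the closure of a point. -/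
def SoberSp (X : Type) [TopologicalSpace X] : Prop :=
  T0Space X ∧ ∀ C : Set X, IrredSet C → ∃ x : X, C = closure {x}

/-- `U` is compact in `V` if every open cover of `V` has a finite subcollection covering `U`. -/
def CompactIn {X : Type} [TopologicalSpace X] (U V : Set X) : Prop :=
  ∀ 𝒞 : Set (Set X), (∀ W ∈ 𝒞, IsOpen W) → V ⊆ ⋃₀ 𝒞 →
    ∃ 𝒻 : Set (Set X), 𝒻 ⊆ 𝒞 ∧ 𝒻.Finite ∧ U ⊆ ⋃₀ 𝒻

/-- A space is core compact if every open set `O` is the union of the open sets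
`O'` with `O'` compact in `O`. -/
def CoreCompact (X : Type) [TopologicalSpace X] : Prop :=
  ∀ O : Set X, IsOpen O → O = ⋃₀ {O' : Set X | IsOpen O' ∧ CompactIn O' O}

/-- A space is supersober if it is T0 and every ultrafilter has either the empty set
or the closure of a point as its set of limits. -/
def SuperSober (X : Type) [TopologicalSpace X] : Prop :=
  T0Space X ∧ ∀ F : Ultrafilter X,
    {x : X | (F : Filter X) ≤ nhds x} = (∅ : Set X) ∨
      ∃ y : X, {x : X | (F : Filter X) ≤ nhds x} = closure {y}

/-- A poset is upwards-ccc if any uncountable subset has two distinct members with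
a common upper bound. -/
def UpCCC (P : Type) [PartialOrder P] : Prop :=
  ∀ S : Set P, ¬ S.Countable → ∃ x ∈ S, ∃ y ∈ S, x ≠ y ∧ ∃ z : P, x ≤ z ∧ y ≤ z

/-- A subset of a poset is cofinal if every element of the poset is below some element of it. -/
def IsCofinalIn {P : Type} [PartialOrder P] (d : Set P) : Prop :=
  ∀ p : P, ∃ q ∈ d, p ≤ q

/-- A subset `R` of a poset is upwards-centered if every finite subset of `R`
has an upper bound in the poset. -/
def UpCentered {P : Type} [PartialOrder P] (R : Set P) : Prop :=
  ∀ F : Set P, F ⊆ R → F.Finite → ∃ z : P, ∀ x ∈ F, x ≤ z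

/-- A poset is upwards-σ-centered if it is the union of countably many
upwards-centered subsets. -/
def UpSigmaCentered (P : Type) [PartialOrder P] : Prop :=
  ∃ C : ℕ → Set P, (∀ n, UpCentered (C n)) ∧ (⋃ n, C n) = Set.univ

/-- Witness for the defining property of the cardinal 𝔪 at cardinal `κ`:
there are a nonempty upwards-ccc poset `P` and κ cofinal subsets of `P`
such that no upwards-directed subset of `P` meets every one of them. -/
def MWitness (κ : Cardinal) : Prop :=
  ∃ (P : Type) (inst : PartialOrder P), Nonempty P ∧ @UpCCC P inst ∧
    ∃ D : Set (Set P), Cardinal.mk ↥D = κ ∧ (∀ d ∈ D, @IsCofinalIn P inst d) ∧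
      ¬ ∃ S : Set P, DirectedOn inst.le S ∧ ∀ d ∈ D, (S ∩ d).Nonempty

/-- The cardinal 𝔪, the least cardinal admitting an `MWitness`. -/
noncomputable def cardM : Cardinal := sInf {κ : Cardinal | MWitness κ}

/-- Witness for the defining property of the cardinal 𝔭 at cardinal `κ`:
there are a nonempty upwards-σ-centered poset `P` and κ cofinal subsets of `P`
such that no upwards-directed subset of `P` meets every one of them. -/
def PWitness (κ : Cardinal) : Prop :=
  ∃ (P : Type) (inst : PartialOrder P), Nonempty P ∧ @UpSigmaCentered P inst ∧
    ∃ D : Set (Set P), Cardinal.mk ↥D = κ ∧ (∀ d ∈ D, @IsCofinalIn P inst d) ∧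
      ¬ ∃ S : Set P, DirectedOn inst.le S ∧ ∀ d ∈ D, (S ∩ d).Nonempty

/-- The cardinal 𝔭, the least cardinal admitting a `PWitness`. -/
noncomputable def cardP : Cardinal := sInf {κ : Cardinal | PWitness κ}

/-- The nonempty open subsets of a space. -/
def NonemptyOpens (X : Type) [TopologicalSpace X] : Type :=
  {U : Set X // IsOpen U ∧ U.Nonempty}

/-- The nonempty open sets, partially ordered by reverse inclusion. -/
instance {X : Type} [TopologicalSpace X] : PartialOrder (NonemptyOpens X) where
  le U V := V.1 ⊆ U.1
  le_refl U := subset_rfl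
  le_trans a b c h₁ h₂ := Set.Subset.trans h₂ h₁
  le_antisymm a b h₁ h₂ := Subtype.ext (Set.Subset.antisymm h₂ h₁)

/-- A space is σ-centered if its poset of nonempty open sets under reverse inclusion
is upwards-σ-centered. -/
def SigmaCenteredSpace (X : Type) [TopologicalSpace X] : Prop :=
  UpSigmaCentered (NonemptyOpens X)

/-- `x` is way below `y` if for every directed set `D`, `y ≤ sSup D` implies
`x ≤ d` for some `d ∈ D`. -/
def WayBelow {L : Type} [CompleteLattice L] (x y : L) : Prop :=
  ∀ D : Set L, D.Nonempty → DirectedOn (· ≤ ·) D → y ≤ sSup D → ∃ d ∈ D, x ≤ d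

/-- A complete lattice is upwards-continuous if for every `y` the set of elements
way below `y` is directed with supremum `y`. -/
def UpContinuousLat (L : Type) [CompleteLattice L] : Prop :=
  ∀ y : L, DirectedOn (· ≤ ·) {x : L | WayBelow x y} ∧ sSup {x : L | WayBelow x y} = y

/-- A lattice is distributive if it satisfies both distributive laws. -/
def DistribLat (L : Type) [CompleteLattice L] : Prop :=
  ∀ a b c : L, a ⊓ (b ⊔ c) = (a ⊓ b) ⊔ (a ⊓ c) ∧ a ⊔ (b ⊓ c) = (a ⊔ b) ⊓ (a ⊔ c)

/-- A complete lattice is downwards-ccc if any uncountable subset has two distinct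
members whose meet is not `⊥`. -/
def DownCCC (L : Type) [CompleteLattice L] : Prop :=
  ∀ S : Set L, ¬ S.Countable → ∃ x ∈ S, ∃ y ∈ S, x ≠ y ∧ x ⊓ y ≠ ⊥

/-- The nonbottom elements of a complete lattice. -/
def NonBot (L : Type) [CompleteLattice L] : Type := {x : L // x ≠ ⊥}

/-- The nonbottom elements of a complete lattice, with the order reversed. -/
instance {L : Type} [CompleteLattice L] : PartialOrder (NonBot L) where
  le a b := b.1 ≤ a.1
  le_refl a := le_refl _
  le_trans a b c h₁ h₂ := le_trans h₂ h₁
  le_antisymm a b h₁ h₂ := Subtype.ext (le_antisymm h₂ h₁)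

/-- A complete lattice is downwards-σ-centered if its set of nonbottom elements,
with the order reversed, is upwards-σ-centered. -/
def DownSigmaCentered (L : Type) [CompleteLattice L] : Prop :=
  UpSigmaCentered (NonBot L)

/-- An element `x` is a non-zero divisor if `x ⊓ y ≠ ⊥` for every `y ≠ ⊥`. -/
def IsNZDiv {L : Type} [CompleteLattice L] (x : L) : Prop :=
  ∀ y : L, y ≠ ⊥ → x ⊓ y ≠ ⊥

/-- An element `p` is irreducible if `p = a ⊓ b` implies `p = a` or `p = b`. -/
def IrredElem {L : Type} [CompleteLattice L] (p : L) : Prop :=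
  ∀ a b : L, p = a ⊓ b → p = a ∨ p = b
/-- Cohen-type poset: pairs of disjoint finite sets of naturals. -/
def CohenP : Type := {p : Finset ℕ × Finset ℕ // Disjoint p.1 p.2}

instance : PartialOrder CohenP where
  le p q := p.1.1 ⊆ q.1.1 ∧ p.1.2 ⊆ q.1.2
  le_refl p := ⟨subset_rfl, subset_rfl⟩
  le_trans a b c h1 h2 := ⟨h1.1.trans h2.1, h1.2.trans h2.2⟩
  le_antisymm a b h1 h2 :=
    Subtype.ext (Prod.ext (subset_antisymm h1.1 h2.1) (subset_antisymm h1.2 h2.2))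

instance : Countable CohenP := by
  unfold CohenP; infer_instance

instance : Nonempty CohenP := ⟨⟨(∅, ∅), by simp⟩⟩

theorem pwitness_nonempty : {κ : Cardinal | PWitness κ}.Nonempty := by
  classical
  set Df : (ℕ → Bool) → Set CohenP := fun f =>
    {p | ∃ n, (f n = true ∧ n ∈ p.1.2) ∨ (f n = false ∧ n ∈ p.1.1)} with hDf
  set D : Set (Set CohenP) := Set.range Df with hD
  refine ⟨Cardinal.mk ↥D, CohenP, inferInstance, inferInstance, ?_, D, rfl, ?_, ?_⟩
  · -- σ-centered since countable
    obtain ⟨e, he⟩ := exists_surjective_nat CohenP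
    refine ⟨fun n => {e n}, fun n F hF _ => ⟨e n, fun x hx => ?_⟩, ?_⟩
    · have : x = e n := hF hx
      subst this; exact le_refl _
    · ext p
      simp only [Set.mem_iUnion, Set.mem_singleton_iff, Set.mem_univ, iff_true]
      obtain ⟨n, hn⟩ := he p
      exact ⟨n, hn.symm⟩
  · -- each Df f is cofinal
    rintro d ⟨f, rfl⟩ p
    obtain ⟨n, hn⟩ := Infinite.exists_notMem_finset (p.1.1 ∪ p.1.2)
    simp only [Finset.mem_union, not_or] at hn
    by_cases hf : f n = true
    · refine ⟨⟨(p.1.1, insert n p.1.2), ?_⟩, ⟨n, Or.inl ⟨hf, Finset.mem_insert_self _ _⟩⟩,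
        subset_rfl, Finset.subset_insert _ _⟩
      rw [Finset.disjoint_insert_right]
      exact ⟨hn.1, p.2⟩
    · refine ⟨⟨(insert n p.1.1, p.1.2), ?_⟩,
        ⟨n, Or.inr ⟨Bool.not_eq_true _ |>.mp hf, Finset.mem_insert_self _ _⟩⟩,
        Finset.subset_insert _ _, subset_rfl⟩
      rw [Finset.disjoint_insert_left]
      exact ⟨hn.2, p.2⟩
  · -- no directed set meets all
    rintro ⟨S, hdir, hmeet⟩
    set g : ℕ → Bool := fun n => decide (∃ p ∈ S, n ∈ p.1.1) with hg
    obtain ⟨p, hpS, hpD⟩ := hmeet (Df g) ⟨g, rfl⟩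
    obtain ⟨n, hcase⟩ := hpD
    rcases hcase with ⟨hgt, hn2⟩ | ⟨hgf, hn1⟩
    · rw [hg] at hgt
      simp only [decide_eq_true_iff] at hgt
      obtain ⟨q, hqS, hn1⟩ := hgt
      obtain ⟨r, hrS, hpr, hqr⟩ := hdir p hpS q hqS
      exact absurd (hpr.2 hn2) (Finset.disjoint_left.mp r.2 (hqr.1 hn1))
    · rw [hg] at hgf
      simp only [decide_eq_false_iff_not] at hgf
      exact hgf ⟨p, hpS, hn1⟩

/-- The Alexandrov (upper set) topology on a poset. -/
def alexTop (P : Type) [PartialOrder P] : TopologicalSpace P where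
  IsOpen U := IsUpperSet U
  isOpen_univ := isUpperSet_univ
  isOpen_inter _ _ h1 h2 := h1.inter h2
  isOpen_sUnion _ h := isUpperSet_sUnion h

/-- If in every σ-centered core compact space, for any family of at most κ
dense open sets there is an irreducible subset meeting every member, then κ < 𝔭. -/
theorem statement9 (κ : Cardinal)
    (h : ∀ (X : Type) [TopologicalSpace X], SigmaCenteredSpace X → CoreCompact X →
      ∀ 𝒟 : Set (Set X), Cardinal.mk ↥𝒟 ≤ κ → (∀ O ∈ 𝒟, IsOpen O ∧ Dense O) →
        ∃ C : Set X, IrredSet C ∧ ∀ O ∈ 𝒟, (C ∩ O).Nonempty) :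
    κ < cardP := by
  classical
  have hmem : PWitness cardP := csInf_mem pwitness_nonempty
  by_contra hlt
  rw [not_lt] at hlt  -- cardP ≤ κ
  obtain ⟨P, instP, hP, hσ, D, hmk, hcof, hnd⟩ := hmem
  letI := instP
  haveI := hP
  letI tP : TopologicalSpace P := alexTop P
  have hopen : ∀ U : Set P, IsOpen U ↔ IsUpperSet U := fun _ => Iff.rfl
  -- upper closure of a point is open and nonempty
  have hup : ∀ z : P, IsOpen {y : P | z ≤ y} :=
    fun z => (hopen _).mpr (fun a b hab ha => le_trans ha hab)
  -- σ-centered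
  have hsc : SigmaCenteredSpace P := by
    obtain ⟨Cn, hcent, huniv⟩ := hσ
    refine ⟨fun n => {U : NonemptyOpens P | (U.1 ∩ Cn n).Nonempty}, fun n F hFR hFfin => ?_, ?_⟩
    · set pick : NonemptyOpens P → P := fun U =>
        if h : (U.1 ∩ Cn n).Nonempty then h.choose else Classical.arbitrary P with hpick
      have hpickmem : ∀ U ∈ F, pick U ∈ U.1 ∩ Cn n := by
        intro U hU
        have hne : (U.1 ∩ Cn n).Nonempty := hFR hU
        rw [hpick]; simp only [hne, dif_pos]
        exact hne.choose_spec
      obtain ⟨z, hz⟩ := hcent n (pick '' F)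
        (by rintro _ ⟨U, hU, rfl⟩; exact (hpickmem U hU).2) (hFfin.image _)
      refine ⟨⟨{y | z ≤ y}, hup z, z, le_refl z⟩, fun U hU => ?_⟩
      -- U ≤ Z means {y | z ≤ y} ⊆ U.1
      intro y hy
      have h1 : pick U ∈ U.1 := (hpickmem U hU).1
      have h2 : pick U ≤ z := hz _ ⟨U, hU, rfl⟩
      exact ((hopen U.1).mp U.2.1) (h2.trans hy) h1
    · rw [Set.eq_univ_iff_forall]
      intro U
      obtain ⟨x, hx⟩ := U.2.2
      have : x ∈ ⋃ n, Cn n := by rw [huniv]; trivial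
      obtain ⟨n, hn⟩ := Set.mem_iUnion.mp this
      exact Set.mem_iUnion.mpr ⟨n, ⟨x, hx, hn⟩⟩
  -- core compact
  have hcc : CoreCompact P := by
    intro O hO
    apply Set.Subset.antisymm
    · intro x hx
      refine ⟨{y | x ≤ y}, ⟨hup x, ?_⟩, le_refl x⟩
      intro 𝒞 hops hcov
      obtain ⟨W, hW𝒞, hxW⟩ := hcov hx
      exact ⟨{W}, Set.singleton_subset_iff.mpr hW𝒞, Set.finite_singleton _,
        fun y hy => ⟨W, rfl, ((hopen W).mp (hops W hW𝒞)) hy hxW⟩⟩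
    · rintro y ⟨O', ⟨hO', hci⟩, hyO'⟩
      obtain ⟨𝒻, h𝒻sub, _, h𝒻cov⟩ := hci {O} (by rintro W rfl; exact hO)
        (by rw [Set.sUnion_singleton])
      obtain ⟨W, hW𝒻, hyW⟩ := h𝒻cov hyO'
      have : W = O := h𝒻sub hW𝒻
      exact this ▸ hyW
  -- the family of upward closures of members of D
  set UpS : Set P → Set P := fun d => {y | ∃ p ∈ d, p ≤ y} with hUpS
  set 𝒟 : Set (Set P) := UpS '' D with h𝒟
  have hcard : Cardinal.mk ↥𝒟 ≤ κ := le_trans (Cardinal.mk_image_le) (hmk ▸ hlt)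
  have hdo : ∀ O ∈ 𝒟, IsOpen O ∧ Dense O := by
    rintro _ ⟨d, hd, rfl⟩
    constructor
    · refine (hopen _).mpr ?_
      rintro a b hab ⟨p, hp, hpa⟩
      exact ⟨p, hp, hpa.trans hab⟩
    · rw [dense_iff_inter_open]
      rintro U hU ⟨x, hx⟩
      obtain ⟨q, hqd, hxq⟩ := hcof d hd x
      exact ⟨q, ((hopen U).mp hU) hxq hx, q, hqd, le_refl q⟩
  obtain ⟨C, ⟨hCcl, hCne, hCirr⟩, hCmeets⟩ := h P hsc hcc 𝒟 hcard hdo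
  -- C is a lower set
  have hlow : IsLowerSet C := isUpperSet_compl.mp ((hopen _).mp hCcl.isOpen_compl)
  -- C is directed
  have hdir : DirectedOn instP.le C := by
    intro p hp q hq
    by_contra hcon
    push_neg at hcon
    have hAB : C = (C ∩ {y | p ≤ y}ᶜ) ∪ (C ∩ {y | q ≤ y}ᶜ) := by
      apply Set.Subset.antisymm
      · intro c hc
        by_cases h1 : p ≤ c
        · by_cases h2 : q ≤ c
          · exact absurd h2 (hcon c hc h1)
          · exact Or.inr ⟨hc, h2⟩
        · exact Or.inl ⟨hc, h1⟩
      · rintro c (⟨hc, _⟩ | ⟨hc, _⟩) <;> exact hc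
    rcases hCirr _ _ (hCcl.inter (isClosed_compl_iff.mpr (hup p)))
        (hCcl.inter (isClosed_compl_iff.mpr (hup q))) hAB with hCA | hCB
    · have := hCA ▸ hp
      exact this.2 (le_refl p)
    · have := hCB ▸ hq
      exact this.2 (le_refl q)
  -- C meets every d ∈ D
  refine hnd ⟨C, hdir, fun d hd => ?_⟩
  obtain ⟨c, hcC, p, hpd, hpc⟩ := hCmeets (UpS d) ⟨d, hd, rfl⟩
  exact ⟨p, hlow hpc hcC, hpd⟩
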